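/- With g, s_±, f_± as above, one has f_−(v)·f_−(v−2) = 0 for every v ∈ (0,4], and f_+(v)·f_+(v+2) = 0 for every v ∈ [−4,0). Consequently the difference operator (Ω̂²ψ)(v) = −f_+(v)f_+(v+2)ψ(v+4) + [f_+(v)² + f_−(v)²]ψ(v) − f_−(v)f_−(v−2)ψ(v−4) maps any function supported on the semi-lattice {ε + 4n : n ∈ ℕ} (with ε ∈ (0,4]) to a function supported on the same semi-lattice. -/
import Mathlib


/-- g(v) = ||1+1/v|^{1/3} − |1−1/v|^{1/3}|^{−1/2} for v ≠ 0, g(0) = 0. -/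
noncomputable def gLQC (v : ℝ) : ℝ :=
  if v = 0 then 0
  else |(|1 + 1 / v|) ^ ((1 : ℝ) / 3) - (|1 - 1 / v|) ^ ((1 : ℝ) / 3)| ^ (-(1 : ℝ) / 2)

/-- s_+(v) = sgn(v+2) + sgn(v). -/
noncomputable def sPlus (v : ℝ) : ℝ := Real.sign (v + 2) + Real.sign v

/-- s_−(v) = sgn(v−2) + sgn(v). -/
noncomputable def sMinus (v : ℝ) : ℝ := Real.sign (v - 2) + Real.sign v

/-- f_+(v) = g(v+2)·s_+(v)·g(v). -/
noncomputable def fPlus (v : ℝ) : ℝ := gLQC (v + 2) * sPlus v * gLQC v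

/-- f_−(v) = g(v−2)·s_−(v)·g(v). -/
noncomputable def fMinus (v : ℝ) : ℝ := gLQC (v - 2) * sMinus v * gLQC v

/-- The difference operator Ω̂² of loop quantum cosmology. -/
noncomputable def OmegaSq (ψ : ℝ → ℂ) (v : ℝ) : ℂ :=
  -(fPlus v * fPlus (v + 2) : ℝ) * ψ (v + 4)
    + ((fPlus v) ^ 2 + (fMinus v) ^ 2 : ℝ) * ψ v
    - (fMinus v * fMinus (v - 2) : ℝ) * ψ (v - 4)

lemma gLQC_zero : gLQC 0 = 0 := by simp [gLQC]

lemma fMinus_eq_zero {v : ℝ} (h0 : 0 ≤ v) (h2 : v ≤ 2) : fMinus v = 0 := by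
  rcases eq_or_lt_of_le h0 with h | h
  · simp [fMinus, ← h, gLQC_zero]
  rcases eq_or_lt_of_le h2 with h' | h'
  · simp [fMinus, h', gLQC_zero]
  · have : sMinus v = 0 := by
      unfold sMinus
      rw [Real.sign_of_neg (by linarith), Real.sign_of_pos h]
      ring
    simp [fMinus, this]

lemma fPlus_eq_zero {v : ℝ} (h0 : -2 ≤ v) (h2 : v ≤ 0) : fPlus v = 0 := by
  rcases eq_or_lt_of_le h2 with h | h
  · simp [fPlus, h, gLQC_zero]
  rcases eq_or_lt_of_le h0 with h' | h'
  · simp [fPlus, ← h', gLQC_zero]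
  · have : sPlus v = 0 := by
      unfold sPlus
      rw [Real.sign_of_pos (by linarith), Real.sign_of_neg h]
      ring
    simp [fPlus, this]

lemma fMinus_prod {v : ℝ} (h0 : 0 < v) (h4 : v ≤ 4) : fMinus v * fMinus (v - 2) = 0 := by
  rcases le_or_gt v 2 with h | h
  · rw [fMinus_eq_zero h0.le h, zero_mul]
  · rw [fMinus_eq_zero (by linarith : (0:ℝ) ≤ v - 2) (by linarith), mul_zero]

lemma fPlus_prod {v : ℝ} (h0 : -4 ≤ v) (h4 : v ≤ 0) : fPlus v * fPlus (v + 2) = 0 := by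
  rcases le_or_gt (-2 : ℝ) v with h | h
  · rw [fPlus_eq_zero h h4, zero_mul]
  · rw [fPlus_eq_zero (by linarith : (-2:ℝ) ≤ v + 2) (by linarith), mul_zero]

/-- f_−(v)f_−(v−2) = 0 on (0,4], f_+(v)f_+(v+2) = 0 on [−4,0), and consequently
Ω̂² preserves the support on any semi-lattice {ε+4n : n ∈ ℕ} with ε ∈ (0,4]. -/
theorem OmegaSq_preserves_semilattice :
    (∀ v : ℝ, 0 < v → v ≤ 4 → fMinus v * fMinus (v - 2) = 0) ∧
    (∀ v : ℝ, -4 ≤ v → v < 0 → fPlus v * fPlus (v + 2) = 0) ∧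
    (∀ ε : ℝ, 0 < ε → ε ≤ 4 → ∀ ψ : ℝ → ℂ,
      (∀ v : ℝ, (¬ ∃ n : ℕ, v = ε + 4 * n) → ψ v = 0) →
      ∀ v : ℝ, (¬ ∃ n : ℕ, v = ε + 4 * n) → OmegaSq ψ v = 0) := by
  refine ⟨fun v h1 h2 => fMinus_prod h1 h2,
    fun v h1 h2 => fPlus_prod h1 h2.le, ?_⟩
  intro ε hε hε4 ψ hψ v hv
  have hψv : ψ v = 0 := hψ v hv
  have hψm : ψ (v - 4) = 0 := by
    apply hψ
    rintro ⟨n, hn⟩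
    exact hv ⟨n + 1, by push_cast; linarith⟩
  unfold OmegaSq
  rw [hψv, hψm, mul_zero, mul_zero, add_zero, sub_zero]
  by_cases hp : ∃ n : ℕ, v + 4 = ε + 4 * n
  · obtain ⟨n, hn⟩ := hp
    match n with
    | 0 =>
      have hv0 : v = ε - 4 := by push_cast at hn; linarith
      have : fPlus v * fPlus (v + 2) = 0 :=
        fPlus_prod (by linarith) (by linarith)
      rw [this]
      simp
    | (m + 1) =>
      exact absurd ⟨m, by push_cast at hn ⊢; linarith⟩ hv
  · simp [hψ _ hp]
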